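/- Let (a_n) be a nonincreasing sequence of positive reals with convergent sum, and let A be its achievement set (set of all subsums). If (α, β) is a gap of A of order k (i.e., a connectivity component of I_{k-1} \ I_k), then its length β − α is at most a_k − r_k, where r_k is the k-th remainder. In particular, the principal gap (r_k, a_k) has maximal length among all gaps of order k. -/
import Mathlib


open Set MeasureTheory Pointwise

/-- The achievement set (set of all subsums) of the series `∑ a n`. -/
noncomputable def achievementSet (a : ℕ → ℝ) : Set ℝ :=
  {x | ∃ I : Set ℕ, HasSum (fun i : I => a i) x}

/-- `tail a n` is the sum of the terms with index `≥ n`. -/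
noncomputable def tail (a : ℕ → ℝ) (n : ℕ) : ℝ := ∑' i : ℕ, a (n + i)

/-- The set of `k`-initial subsums: sums over subsets of the first `k` terms. -/
def Fset (a : ℕ → ℝ) (k : ℕ) : Set ℝ :=
  {x | ∃ I : Finset ℕ, I ⊆ Finset.range k ∧ x = ∑ i ∈ I, a i}

/-- The `k`-th iterate `I_k = ⋃_{f ∈ F_k} [f, f + r_k]`. -/
noncomputable def iter (a : ℕ → ℝ) (k : ℕ) : Set ℝ :=
  ⋃ f ∈ Fset a k, Set.Icc f (f + tail a k)

/-- A Cantor set: a nonempty compact perfect nowhere dense subset of `ℝ`. -/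
def IsCantorSet (C : Set ℝ) : Prop :=
  C.Nonempty ∧ IsCompact C ∧ Perfect C ∧ interior C = ∅

/-- A Cantorval: a nonempty compact set equal to the closure of its interior such that
both endpoints of every nontrivial connected component are accumulation points of
trivial (one-point) components. -/
def IsCantorval (P : Set ℝ) : Prop :=
  P.Nonempty ∧ IsCompact P ∧ P = closure (interior P) ∧
  ∀ x ∈ P, (connectedComponentIn P x).Nontrivial →
    ∀ y ∈ ({sInf (connectedComponentIn P x), sSup (connectedComponentIn P x)} : Set ℝ),
      ∀ ε > 0, ∃ z ∈ P, z ≠ y ∧ |z - y| < ε ∧ connectedComponentIn P z = {z}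

/-- Every gap of order k (a connected component of I_{k-1} \ I_k) has
length at most a_k - r_k; in particular the principal gap (r_k, a_k) has maximal
length among gaps of order k. With 0-indexing, the paper's a_k is a (k-1) and r_k
is tail a k. -/
theorem stmt_0 (a : ℕ → ℝ) (hpos : ∀ n, 0 < a n) (hmono : Antitone a)
    (hsum : Summable a) (k : ℕ) (hk : 1 ≤ k) (α β : ℝ) (hαβ : α < β)
    (x : ℝ) (hx : x ∈ iter a (k - 1) \ iter a k)
    (hgap : Set.Ioo α β = connectedComponentIn (iter a (k - 1) \ iter a k) x) :
    β - α ≤ a (k - 1) - tail a k := by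
  obtain ⟨m, rfl⟩ : ∃ m, k = m + 1 := ⟨k - 1, (Nat.succ_pred_eq_of_pos hk).symm⟩
  simp only [Nat.add_sub_cancel] at hx hgap ⊢
  have htail0 : 0 ≤ tail a (m + 1) := tsum_nonneg (fun i => (hpos _).le)
  have hsummable : Summable (fun i => a (m + i)) :=
    hsum.comp_injective (fun i j h => by omega)
  have htail : tail a m = a m + tail a (m + 1) := by
    rw [tail, Summable.tsum_eq_zero_add hsummable]
    have : ∀ i, a (m + (i + 1)) = a (m + 1 + i) := fun i => by ring_nf
    simp only [this, tail, add_zero]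
  obtain ⟨hx1, hx2⟩ := hx
  obtain ⟨f, hf, hxf⟩ : ∃ f ∈ Fset a m, x ∈ Icc f (f + tail a m) := by
    have := hx1
    simp only [iter, mem_iUnion, mem_Icc] at this
    obtain ⟨g, hg, h1, h2⟩ := this
    exact ⟨g, hg, h1, h2⟩
  obtain ⟨I, hI, rfl⟩ := hf
  have hmemk : (∑ i ∈ I, a i) ∈ Fset a (m + 1) :=
    ⟨I, hI.trans (Finset.range_subset_range.mpr (by omega)), rfl⟩
  have hmI : m ∉ I := fun h => by
    have := Finset.mem_range.mp (hI h); omega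
  have hmemk2 : (∑ i ∈ I, a i) + a m ∈ Fset a (m + 1) := by
    refine ⟨insert m I, ?_, ?_⟩
    · intro i hi
      rcases Finset.mem_insert.mp hi with rfl | hi
      · simp
      · exact (hI.trans (Finset.range_subset_range.mpr (by omega))) hi
    · rw [Finset.sum_insert hmI]; ring
  set f := ∑ i ∈ I, a i with hfdef
  have hsub : ∀ g ∈ Fset a (m + 1), Icc g (g + tail a (m + 1)) ⊆ iter a (m + 1) :=
    fun g hg y hy => mem_biUnion hg hy
  have hxgt : f + tail a (m + 1) < x := by
    by_contra h
    exact hx2 (hsub f hmemk ⟨hxf.1, not_lt.mp h⟩)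
  have hxlt : x < f + a m := by
    by_contra h
    apply hx2
    apply hsub _ hmemk2
    have h2 := hxf.2; rw [htail] at h2
    exact ⟨not_lt.mp h, by linarith⟩
  have hxmem : x ∈ Ioo α β := by
    rw [hgap]; exact mem_connectedComponentIn ⟨hx1, hx2⟩
  have hIoo : Ioo α β ⊆ iter a m \ iter a (m + 1) := by
    rw [hgap]; exact connectedComponentIn_subset _ _
  have hβ : β ≤ f + a m := by
    by_contra h
    have hmem : (f + a m) ∈ Ioo α β := ⟨lt_trans hxmem.1 hxlt, not_le.mp h⟩
    exact (hIoo hmem).2 (hsub _ hmemk2 ⟨le_refl _, by linarith⟩)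
  have hα : f + tail a (m + 1) ≤ α := by
    by_contra h
    have hmem : (f + tail a (m + 1)) ∈ Ioo α β := ⟨not_le.mp h, lt_trans hxgt hxmem.2⟩
    exact (hIoo hmem).2 (hsub _ hmemk ⟨by linarith, le_refl _⟩)
  linarith
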